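/- Spectral bound on the power needed for Hilbertian Rayleigh quotient saturation: in the setting of the previous statement, t(x; A) ≤ ⌈ log(2d) / log(2/(1 + λ₂(A))) ⌉ whenever λ₂(A) < 1. In particular, if t ≥ log(2d)/log(2/(1+λ₂(A))) then R(x; ((1/2)Id + (1/2)A)^{2t}, ‖·‖_H²) ≥ 1 − 1/(4d²). -/

import Mathlib

open scoped BigOperators

/-- The second-largest eigenvalue of A as a self-adjoint operator on L₂(π). -/
noncomputable def lambdaTwo (n : ℕ) (π : Fin n → ℝ)
    (A : Matrix (Fin n) (Fin n) ℝ) : ℝ :=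
  sSup {r : ℝ | ∃ u : Fin n → ℝ, (∑ i, π i * u i) = 0 ∧
    (∑ i, π i * u i ^ 2) = 1 ∧ r = ∑ i, ∑ j, π i * A i j * u i * u j}

/-- The Hilbertian Rayleigh quotient of the (2t)-th power of the lazy matrix
(1/2)Id + (1/2)A, evaluated at a configuration y of points of a Hilbert space. -/
noncomputable def lazyPowerRayleigh (n : ℕ) (π : Fin n → ℝ)
    (A : Matrix (Fin n) (Fin n) ℝ) {H : Type*} [NormedAddCommGroup H]
    [InnerProductSpace ℝ H] (y : Fin n → H) (t : ℕ) : ℝ :=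
  (∑ i, ∑ j, π i *
      ((((1 / 2 : ℝ) • (1 : Matrix (Fin n) (Fin n) ℝ) + (1 / 2 : ℝ) • A) ^ (2 * t)) i j) *
      ‖y i - y j‖ ^ 2) /
    (∑ i, ∑ j, π i * π j * ‖y i - y j‖ ^ 2)

noncomputable section SatAux
open Finset

variable {n : ℕ} {H : Type*} [NormedAddCommGroup H] [InnerProductSpace ℝ H]

/-- Action of a real matrix on an `H`-valued configuration. -/
def matAct (M : Matrix (Fin n) (Fin n) ℝ) (z : Fin n → H) : Fin n → H :=
  fun i => ∑ j, M i j • z j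

lemma matAct_mul (M N : Matrix (Fin n) (Fin n) ℝ) (z : Fin n → H) :
    matAct (M * N) z = matAct M (matAct N z) := by
  funext i
  simp only [matAct, Matrix.mul_apply, Finset.sum_smul, Finset.smul_sum, smul_smul]
  exact Finset.sum_comm

lemma rev_pow (π : Fin n → ℝ) (M : Matrix (Fin n) (Fin n) ℝ)
    (hrev : ∀ i j, π i * M i j = π j * M j i) (t : ℕ) :
    ∀ i j, π i * (M ^ t) i j = π j * (M ^ t) j i := by
  induction t with
  | zero =>
    intro i j
    by_cases h : i = j
    · simp [h]
    · simp [Matrix.one_apply, h, Ne.symm h]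
  | succ t ih =>
    intro i j
    have hcomm : M * M ^ t = M ^ t * M := by rw [← pow_succ', pow_succ]
    rw [pow_succ]
    have key : π i * (M ^ t * M) i j = π j * (M * M ^ t) j i := by
      simp only [Matrix.mul_apply]
      rw [Finset.mul_sum, Finset.mul_sum]
      apply Finset.sum_congr rfl
      intro k _
      calc π i * ((M ^ t) i k * M k j) = (π i * (M ^ t) i k) * M k j := by ring
        _ = (π k * (M ^ t) k i) * M k j := by rw [ih]
        _ = (M ^ t) k i * (π k * M k j) := by ring
        _ = (M ^ t) k i * (π j * M j k) := by rw [hrev]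
        _ = π j * (M j k * (M ^ t) k i) := by ring
    rw [key, hcomm]

lemma row_pow (M : Matrix (Fin n) (Fin n) ℝ) (hrow : ∀ i, ∑ j, M i j = 1) (t : ℕ) :
    ∀ i, ∑ j, (M ^ t) i j = 1 := by
  induction t with
  | zero => intro i; simp [Matrix.one_apply]
  | succ t ih =>
    intro i
    rw [pow_succ]
    simp only [Matrix.mul_apply]
    rw [Finset.sum_comm]
    calc ∑ j, ∑ k, (M ^ t) i j * M j k = ∑ j, (M ^ t) i j * ∑ k, M j k := by
          simp [Finset.mul_sum]
      _ = 1 := by simp [hrow, ih]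

lemma pow_entry_nonneg (M : Matrix (Fin n) (Fin n) ℝ) (h0 : ∀ i j, 0 ≤ M i j) (t : ℕ) :
    ∀ i j, 0 ≤ (M ^ t) i j := by
  induction t with
  | zero => intro i j; by_cases h : i = j <;> simp [Matrix.one_apply, h]
  | succ t ih =>
    intro i j
    rw [pow_succ]
    simp only [Matrix.mul_apply]
    exact Finset.sum_nonneg fun k _ => mul_nonneg (ih i k) (h0 k j)

/-- the π-mean is preserved by a reversible row-stochastic matrix. -/
lemma matAct_mean (π : Fin n → ℝ) (M : Matrix (Fin n) (Fin n) ℝ)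
    (hrev : ∀ i j, π i * M i j = π j * M j i) (hrow : ∀ i, ∑ j, M i j = 1)
    (z : Fin n → H) (hz : ∑ i, π i • z i = 0) :
    ∑ i, π i • matAct M z i = 0 := by
  have : ∑ i, π i • matAct M z i = ∑ j, π j • z j := by
    simp only [matAct, Finset.smul_sum, smul_smul]
    rw [Finset.sum_comm]
    apply Finset.sum_congr rfl
    intro j _
    have : ∀ i, (π i * M i j) • z j = (M j i * π j) • z j := by
      intro i; rw [hrev]; ring_nf
    rw [Finset.sum_congr rfl fun i _ => this i]
    rw [← Finset.sum_smul]
    rw [← Finset.sum_mul, hrow, one_mul]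
  rw [this, hz]

/-- adjointness of a reversible matrix w.r.t. the weighted inner product. -/
lemma sum_inner_matAct (π : Fin n → ℝ) (M : Matrix (Fin n) (Fin n) ℝ)
    (hrev : ∀ i j, π i * M i j = π j * M j i) (z w : Fin n → H) :
    ∑ i, π i * (inner ℝ (matAct M z i) (w i) : ℝ)
      = ∑ i, π i * (inner ℝ (z i) (matAct M w i) : ℝ) := by
  simp only [matAct, sum_inner, inner_sum, real_inner_smul_left, real_inner_smul_right,
    Finset.mul_sum]
  rw [Finset.sum_comm]
  apply Finset.sum_congr rfl
  intro i _
  apply Finset.sum_congr rfl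
  intro j _
  rw [show π j * (M j i * inner ℝ (z i) (w j)) = (π j * M j i) * inner ℝ (z i) (w j) by ring,
    ← hrev]
  ring

lemma form_eq_matAct (π : Fin n → ℝ) (M : Matrix (Fin n) (Fin n) ℝ) (z : Fin n → H) :
    ∑ i, ∑ j, π i * M i j * (inner ℝ (z i) (z j) : ℝ)
      = ∑ i, π i * (inner ℝ (matAct M z i) (z i) : ℝ) := by
  simp only [matAct, sum_inner, real_inner_smul_left, Finset.mul_sum]
  apply Finset.sum_congr rfl
  intro i _
  apply Finset.sum_congr rfl
  intro j _
  rw [real_inner_comm]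
  ring

lemma sum_weight_left (π : Fin n → ℝ) (M : Matrix (Fin n) (Fin n) ℝ)
    (hrow : ∀ i, ∑ j, M i j = 1) (f : Fin n → ℝ) :
    ∑ i, ∑ j, π i * M i j * f i = ∑ i, π i * f i := by
  apply Finset.sum_congr rfl
  intro i _
  calc ∑ j, π i * M i j * f i = (π i * f i) * ∑ j, M i j := by
        rw [Finset.mul_sum]; exact Finset.sum_congr rfl fun j _ => by ring
    _ = π i * f i := by rw [hrow, mul_one]

lemma sum_weight_right (π : Fin n → ℝ) (M : Matrix (Fin n) (Fin n) ℝ)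
    (hrev : ∀ i j, π i * M i j = π j * M j i) (hrow : ∀ i, ∑ j, M i j = 1) (f : Fin n → ℝ) :
    ∑ i, ∑ j, π i * M i j * f j = ∑ i, π i * f i := by
  calc ∑ i, ∑ j, π i * M i j * f j = ∑ i, ∑ j, π j * M j i * f j :=
        Finset.sum_congr rfl fun i _ => Finset.sum_congr rfl fun j _ => by rw [hrev]
    _ = ∑ j, ∑ i, π j * M j i * f j := Finset.sum_comm
    _ = ∑ j, π j * f j := sum_weight_left π (fun a b => M a b) hrow f


lemma matAct_one (z : Fin n → H) : matAct 1 z = z := by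
  funext i
  simp [matAct, Matrix.one_apply, Finset.sum_ite_eq]


/-- abstract bound: quadratic form of an entrywise-nonneg reversible stochastic
matrix is bounded by the weighted squared norm, in absolute value. -/
lemma abs_form_le (π : Fin n → ℝ) (hπpos : ∀ i, 0 < π i) (M : Matrix (Fin n) (Fin n) ℝ)
    (hM0 : ∀ i j, 0 ≤ M i j) (hrev : ∀ i j, π i * M i j = π j * M j i)
    (hrow : ∀ i, ∑ j, M i j = 1) (z : Fin n → H) :
    |∑ i, ∑ j, π i * M i j * (inner ℝ (z i) (z j) : ℝ)| ≤ ∑ i, π i * ‖z i‖ ^ 2 := by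
  have key : ∀ (g : Fin n → Fin n → ℝ), (∀ i j, g i j ≤ (‖z i‖ ^ 2 + ‖z j‖ ^ 2) / 2) →
      ∑ i, ∑ j, π i * M i j * g i j ≤ ∑ i, π i * ‖z i‖ ^ 2 := by
    intro g hg
    calc ∑ i, ∑ j, π i * M i j * g i j
        ≤ ∑ i, ∑ j, π i * M i j * ((‖z i‖ ^ 2 + ‖z j‖ ^ 2) / 2) := by
          apply Finset.sum_le_sum; intro i _
          apply Finset.sum_le_sum; intro j _
          exact mul_le_mul_of_nonneg_left (hg i j) (mul_nonneg (hπpos i).le (hM0 i j))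
      _ = (∑ i, ∑ j, π i * M i j * (‖z i‖ ^ 2 / 2))
          + ∑ i, ∑ j, π i * M i j * (‖z j‖ ^ 2 / 2) := by
          rw [← Finset.sum_add_distrib]
          apply Finset.sum_congr rfl; intro i _
          rw [← Finset.sum_add_distrib]
          apply Finset.sum_congr rfl; intro j _
          ring
      _ = ∑ i, π i * ‖z i‖ ^ 2 := by
          rw [sum_weight_left π M hrow fun i => ‖z i‖ ^ 2 / 2,
            sum_weight_right π M hrev hrow fun i => ‖z i‖ ^ 2 / 2,
            ← Finset.sum_add_distrib]
          apply Finset.sum_congr rfl; intro i _; ring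
  have hbd : ∀ i j : Fin n, |(inner ℝ (z i) (z j) : ℝ)| ≤ (‖z i‖ ^ 2 + ‖z j‖ ^ 2) / 2 := by
    intro i j
    have h := abs_real_inner_le_norm (z i) (z j)
    nlinarith [sq_nonneg (‖z i‖ - ‖z j‖)]
  rw [abs_le]
  constructor
  · rw [neg_le]
    calc -∑ i, ∑ j, π i * M i j * (inner ℝ (z i) (z j) : ℝ)
        = ∑ i, ∑ j, π i * M i j * (-(inner ℝ (z i) (z j) : ℝ)) := by
          rw [← Finset.sum_neg_distrib]
          apply Finset.sum_congr rfl; intro i _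
          rw [← Finset.sum_neg_distrib]
          apply Finset.sum_congr rfl; intro j _; ring
      _ ≤ ∑ i, π i * ‖z i‖ ^ 2 := by
          apply key; intro i j
          have := neg_abs_le (inner ℝ (z i) (z j) : ℝ)
          linarith [hbd i j]
  · apply key; intro i j
    have := le_abs_self (inner ℝ (z i) (z j) : ℝ)
    linarith [hbd i j]

/-- real-valued spectral bound from the definition of lambdaTwo. -/
lemma formA_le_real (π : Fin n → ℝ) (hπpos : ∀ i, 0 < π i)
    (A : Matrix (Fin n) (Fin n) ℝ) (hA0 : ∀ i j, 0 ≤ A i j) (hA1 : ∀ i, ∑ j, A i j = 1)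
    (hArev : ∀ i j, π i * A i j = π j * A j i)
    (u : Fin n → ℝ) (hu : ∑ i, π i * u i = 0) :
    ∑ i, ∑ j, π i * A i j * u i * u j ≤ lambdaTwo n π A * ∑ i, π i * u i ^ 2 := by
  have hform_le : ∀ v : Fin n → ℝ,
      ∑ i, ∑ j, π i * A i j * v i * v j ≤ ∑ i, π i * v i ^ 2 := by
    intro v
    have h := abs_form_le (H := ℝ) π hπpos A hA0 hArev hA1 v
    have e1 : ∑ i, ∑ j, π i * A i j * (inner ℝ (v i) (v j) : ℝ)
        = ∑ i, ∑ j, π i * A i j * v i * v j := by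
      apply Finset.sum_congr rfl; intro i _
      apply Finset.sum_congr rfl; intro j _
      simp [RCLike.inner_apply]; ring
    have e2 : ∑ i, π i * ‖v i‖ ^ 2 = ∑ i, π i * v i ^ 2 := by
      apply Finset.sum_congr rfl; intro i _
      rw [Real.norm_eq_abs, sq_abs]
    rw [e1, e2] at h
    exact le_trans (le_abs_self _) h
  have hbdd : BddAbove {r : ℝ | ∃ u : Fin n → ℝ, (∑ i, π i * u i) = 0 ∧
      (∑ i, π i * u i ^ 2) = 1 ∧ r = ∑ i, ∑ j, π i * A i j * u i * u j} := by
    refine ⟨1, ?_⟩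
    rintro r ⟨v, -, hv2, rfl⟩
    calc ∑ i, ∑ j, π i * A i j * v i * v j ≤ ∑ i, π i * v i ^ 2 := hform_le v
      _ = 1 := hv2
  set s := ∑ i, π i * u i ^ 2 with hs_def
  have hs0 : 0 ≤ s := Finset.sum_nonneg fun i _ => mul_nonneg (hπpos i).le (sq_nonneg _)
  rcases eq_or_lt_of_le hs0 with hs | hs
  · -- s = 0, so u = 0
    have hu0 : ∀ i, u i = 0 := by
      intro i
      have := (Finset.sum_eq_zero_iff_of_nonneg
        (fun i _ => mul_nonneg (hπpos i).le (sq_nonneg (u i)))).mp hs.symm i (Finset.mem_univ i)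
      have hπ := (hπpos i).ne'
      have : u i ^ 2 = 0 := by
        rcases mul_eq_zero.mp this with h | h
        · exact absurd h hπ
        · exact h
      exact pow_eq_zero_iff (by norm_num) |>.mp this
    have : ∑ i, ∑ j, π i * A i j * u i * u j = 0 := by
      apply Finset.sum_eq_zero; intro i _
      apply Finset.sum_eq_zero; intro j _
      rw [hu0 i]; ring
    rw [this, ← hs]; ring_nf
    exact le_refl _
  · -- s > 0, normalize
    set c := Real.sqrt s with hc_def
    have hc : 0 < c := Real.sqrt_pos.mpr hs
    have hc2 : c ^ 2 = s := Real.sq_sqrt hs0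
    set v : Fin n → ℝ := fun i => u i / c with hv_def
    have hv1 : ∑ i, π i * v i = 0 := by
      have : ∀ i, π i * v i = (π i * u i) / c := fun i => by
        simp only [hv_def]; ring
      rw [Finset.sum_congr rfl fun i _ => this i, ← Finset.sum_div, hu, zero_div]
    have hv2 : ∑ i, π i * v i ^ 2 = 1 := by
      have : ∀ i, π i * v i ^ 2 = (π i * u i ^ 2) / s := fun i => by
        simp only [hv_def]; rw [div_pow, hc2]; ring
      rw [Finset.sum_congr rfl fun i _ => this i, ← Finset.sum_div, ← hs_def,
        div_self hs.ne']
    have hvform : ∑ i, ∑ j, π i * A i j * v i * v j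
        = (∑ i, ∑ j, π i * A i j * u i * u j) / s := by
      rw [Finset.sum_div]
      apply Finset.sum_congr rfl; intro i _
      rw [Finset.sum_div]
      apply Finset.sum_congr rfl; intro j _
      simp only [hv_def]
      rw [← hc2]
      calc π i * A i j * (u i / c) * (u j / c)
          = (π i * A i j * u i * u j) * (c⁻¹ * c⁻¹) := by ring
        _ = (π i * A i j * u i * u j) / c ^ 2 := by
            rw [← mul_inv, ← sq, div_eq_mul_inv]
    have hmem : (∑ i, ∑ j, π i * A i j * u i * u j) / s ∈
        {r : ℝ | ∃ u : Fin n → ℝ, (∑ i, π i * u i) = 0 ∧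
          (∑ i, π i * u i ^ 2) = 1 ∧ r = ∑ i, ∑ j, π i * A i j * u i * u j} :=
      ⟨v, hv1, hv2, hvform.symm⟩
    have hle := le_csSup hbdd hmem
    rw [div_le_iff₀ hs] at hle
    calc ∑ i, ∑ j, π i * A i j * u i * u j ≤ lambdaTwo n π A * s := hle
      _ = lambdaTwo n π A * ∑ i, π i * u i ^ 2 := by rw [hs_def]

/-- Hilbert-space-valued spectral bound, via an orthonormal basis of the span. -/
lemma formA_le_H (π : Fin n → ℝ) (hπpos : ∀ i, 0 < π i)
    (A : Matrix (Fin n) (Fin n) ℝ) (hA0 : ∀ i j, 0 ≤ A i j) (hA1 : ∀ i, ∑ j, A i j = 1)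
    (hArev : ∀ i j, π i * A i j = π j * A j i)
    (z : Fin n → H) (hz : ∑ i, π i • z i = 0) :
    ∑ i, ∑ j, π i * A i j * (inner ℝ (z i) (z j) : ℝ)
      ≤ lambdaTwo n π A * ∑ i, π i * ‖z i‖ ^ 2 := by
  classical
  set V := Submodule.span ℝ (Set.range z) with hV
  have hfd : FiniteDimensional ℝ V := FiniteDimensional.span_of_finite ℝ (Set.finite_range z)
  set b := stdOrthonormalBasis ℝ V with hb
  have hmem : ∀ i, z i ∈ V := fun i => Submodule.subset_span (Set.mem_range_self i)
  set z' : Fin n → V := fun i => ⟨z i, hmem i⟩ with hz'def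
  have hz' : ∑ i, π i • z' i = 0 := by
    apply Subtype.coe_injective
    show ((∑ i, π i • z' i : V) : H) = ((0 : V) : H)
    push_cast
    simpa using hz
  set u : Fin (Module.finrank ℝ V) → Fin n → ℝ := fun k i => (inner ℝ (z' i) (b k) : ℝ)
    with hu_def
  have humean : ∀ k, ∑ i, π i * u k i = 0 := by
    intro k
    have : ∑ i, π i * u k i = (inner ℝ (∑ i, π i • z' i) (b k) : ℝ) := by
      rw [sum_inner]
      exact Finset.sum_congr rfl fun i _ => (real_inner_smul_left _ _ _).symm
    rw [this, hz', inner_zero_left]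
  have hinner : ∀ i j, (inner ℝ (z i) (z j) : ℝ) = ∑ k, u k i * u k j := by
    intro i j
    have h1 : (inner ℝ (z i) (z j) : ℝ) = (inner ℝ (z' i) (z' j) : ℝ) := rfl
    rw [h1, ← OrthonormalBasis.sum_inner_mul_inner b (z' i) (z' j)]
    exact Finset.sum_congr rfl fun k _ => by
      have h2 : (inner ℝ (b k) (z' j) : ℝ) = inner ℝ (z' j) (b k) := real_inner_comm _ _
      rw [h2]
  have hnorm : ∀ i, ‖z i‖ ^ 2 = ∑ k, u k i ^ 2 := by
    intro i
    have h1 : ‖z i‖ = ‖z' i‖ := rfl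
    rw [h1, ← real_inner_self_eq_norm_sq,
      ← OrthonormalBasis.sum_inner_mul_inner b (z' i) (z' i)]
    exact Finset.sum_congr rfl fun k _ => by
      have h2 : (inner ℝ (b k) (z' i) : ℝ) = inner ℝ (z' i) (b k) := real_inner_comm _ _
      rw [h2]; ring
  calc ∑ i, ∑ j, π i * A i j * (inner ℝ (z i) (z j) : ℝ)
      = ∑ i, ∑ j, ∑ k, π i * A i j * u k i * u k j := by
        apply Finset.sum_congr rfl; intro i _
        apply Finset.sum_congr rfl; intro j _
        rw [hinner, Finset.mul_sum]
        exact Finset.sum_congr rfl fun k _ => by ring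
    _ = ∑ i, ∑ k, ∑ j, π i * A i j * u k i * u k j :=
        Finset.sum_congr rfl fun i _ => Finset.sum_comm
    _ = ∑ k, ∑ i, ∑ j, π i * A i j * u k i * u k j := Finset.sum_comm
    _ ≤ ∑ k, lambdaTwo n π A * ∑ i, π i * u k i ^ 2 := by
        apply Finset.sum_le_sum; intro k _
        exact formA_le_real π hπpos A hA0 hA1 hArev (u k) (humean k)
    _ = lambdaTwo n π A * ∑ i, π i * ‖z i‖ ^ 2 := by
        rw [← Finset.mul_sum]
        congr 1
        rw [Finset.sum_comm]
        apply Finset.sum_congr rfl; intro i _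
        rw [hnorm, Finset.mul_sum]


/-- key contraction step via Cauchy-Schwarz for the PSD form of M. -/
lemma contraction_step (π : Fin n → ℝ) (hπpos : ∀ i, 0 < π i)
    (M : Matrix (Fin n) (Fin n) ℝ)
    (hrev : ∀ i j, π i * M i j = π j * M j i) (lam : ℝ) (hlam0 : 0 ≤ lam)
    (hpsd : ∀ w : Fin n → H, 0 ≤ ∑ i, π i * (inner ℝ (matAct M w i) (w i) : ℝ))
    (hub : ∀ w : Fin n → H, ∑ i, π i • w i = 0 →
      ∑ i, π i * (inner ℝ (matAct M w i) (w i) : ℝ) ≤ lam * ∑ i, π i * ‖w i‖ ^ 2)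
    (z : Fin n → H) (hz : ∑ i, π i • z i = 0)
    (hzM : ∑ i, π i • matAct M z i = 0) :
    ∑ i, π i * ‖matAct M z i‖ ^ 2 ≤ lam ^ 2 * ∑ i, π i * ‖z i‖ ^ 2 := by
  set v : Fin n → H := fun i => matAct M z i with hv_def
  set Nz := ∑ i, π i * ‖z i‖ ^ 2 with hNz
  set Nv := ∑ i, π i * ‖v i‖ ^ 2 with hNv
  have hNz0 : 0 ≤ Nz := Finset.sum_nonneg fun i _ => mul_nonneg (hπpos i).le (sq_nonneg _)
  have hNv0 : 0 ≤ Nv := Finset.sum_nonneg fun i _ => mul_nonneg (hπpos i).le (sq_nonneg _)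
  rcases eq_or_lt_of_le hNv0 with hNv1 | hNv1
  · rw [← hNv1]; positivity
  -- the three form values
  set p := ∑ i, π i * (inner ℝ (matAct M z i) (z i) : ℝ) with hp
  set q := ∑ i, π i * (inner ℝ (matAct M z i) (v i) : ℝ) with hq
  set r := ∑ i, π i * (inner ℝ (matAct M v i) (v i) : ℝ) with hr
  have hq_eq : q = Nv := by
    rw [hq, hNv]
    apply Finset.sum_congr rfl; intro i _
    rw [show (matAct M z i : H) = v i from rfl, real_inner_self_eq_norm_sq]
  have hp0 : 0 ≤ p := hpsd z
  have hr0 : 0 ≤ r := hpsd v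
  have hpub : p ≤ lam * Nz := hub z hz
  have hrub : r ≤ lam * Nv := hub v hzM
  -- quadratic expansion: ∀ c, 0 ≤ p + 2cq + c²r
  have hquad : ∀ c : ℝ, 0 ≤ p + 2 * c * q + c ^ 2 * r := by
    intro c
    set w : Fin n → H := fun i => z i + c • v i with hw_def
    have hMw : ∀ i, matAct M w i = matAct M z i + c • matAct M v i := by
      intro i
      simp only [matAct, hw_def, smul_add, Finset.sum_add_distrib, Finset.smul_sum]
      congr 1
      exact Finset.sum_congr rfl fun j _ => smul_comm _ _ _
    have hqvz : ∑ i, π i * (inner ℝ (matAct M v i) (z i) : ℝ) = q := by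
      rw [sum_inner_matAct π M hrev v z, hq]
    have e : ∑ i, π i * (inner ℝ (matAct M w i) (w i) : ℝ)
        = p + c * q + c * (∑ i, π i * (inner ℝ (matAct M v i) (z i) : ℝ)) + c ^ 2 * r := by
      rw [hp, hq, hr]
      rw [Finset.mul_sum, Finset.mul_sum, Finset.mul_sum]
      rw [← Finset.sum_add_distrib, ← Finset.sum_add_distrib, ← Finset.sum_add_distrib]
      apply Finset.sum_congr rfl
      intro i _
      have hwi : w i = z i + c • v i := rfl
      rw [hMw i, hwi, inner_add_left, inner_add_right, inner_add_right,
        real_inner_smul_left, real_inner_smul_left, real_inner_smul_right,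
        real_inner_smul_right]
      ring
    have h0 := hpsd w
    rw [e, hqvz] at h0
    linarith
  -- Cauchy-Schwarz for the form: q^2 ≤ p * r
  have hcs : q ^ 2 ≤ p * r := by
    rcases eq_or_lt_of_le hr0 with hr1 | hr1
    · -- r = 0 forces q = 0
      have hq0 : q = 0 := by
        by_contra hq0
        have h1 := hquad (-(p + 1) / (2 * q))
        have h2 : p + 2 * (-(p + 1) / (2 * q)) * q + (-(p + 1) / (2 * q)) ^ 2 * r = -1 := by
          rw [← hr1]
          field_simp
          ring
        rw [h2] at h1; linarith
      rw [hq0]; nlinarith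
    · have h1 := hquad (-q / r)
      have h2 : p + 2 * (-q / r) * q + (-q / r) ^ 2 * r = p - q ^ 2 / r := by
        field_simp
        ring
      rw [h2] at h1
      have h3 : q ^ 2 / r ≤ p := by linarith
      calc q ^ 2 = (q ^ 2 / r) * r := by field_simp
        _ ≤ p * r := mul_le_mul_of_nonneg_right h3 hr1.le
  -- conclude
  have : Nv ^ 2 ≤ lam ^ 2 * Nz * Nv := by
    calc Nv ^ 2 = q ^ 2 := by rw [hq_eq]
      _ ≤ p * r := hcs
      _ ≤ (lam * Nz) * (lam * Nv) := by nlinarith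
      _ = lam ^ 2 * Nz * Nv := by ring
  nlinarith [hNv1]


end SatAux

open Finset

/-- Spectral bound on the power needed for Hilbertian Rayleigh quotient
saturation: any t ≥ log(2d)/log(2/(1+λ₂(A))) satisfies the saturation
condition, and consequently the minimal such t is at most
⌈log(2d)/log(2/(1+λ₂(A)))⌉. -/
theorem saturation_power_spectral_bound (n : ℕ) (π : Fin n → ℝ)
    (hπpos : ∀ i, 0 < π i) (hπ1 : ∑ i, π i = 1)
    (A : Matrix (Fin n) (Fin n) ℝ)
    (hA0 : ∀ i j, 0 ≤ A i j) (hA1 : ∀ i, ∑ j, A i j = 1)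
    (hArev : ∀ i j, π i * A i j = π j * A j i)
    (hlamlt : lambdaTwo n π A < 1) (hlamgt : -1 < lambdaTwo n π A)
    (X : Type*) [NormedAddCommGroup X] [NormedSpace ℝ X]
    (H : Type*) [NormedAddCommGroup H] [InnerProductSpace ℝ H]
    (T : X ≃ₗ[ℝ] H) (d : ℝ) (hd : 1 ≤ d)
    (hT : ∀ y : X, ‖T y‖ ≤ ‖y‖ ∧ ‖y‖ ≤ d * ‖T y‖)
    (x : Fin n → X) (hx : ∃ i j, x i ≠ x j) :
    (∀ t : ℕ,
      Real.log (2 * d) / Real.log (2 / (1 + lambdaTwo n π A)) ≤ (t : ℝ) →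
        1 - 1 / (4 * d ^ 2) ≤ lazyPowerRayleigh n π A (fun i => T (x i)) t) ∧
    ∀ t : ℕ,
      (1 - 1 / (4 * d ^ 2) ≤ lazyPowerRayleigh n π A (fun i => T (x i)) t) →
      (∀ s : ℕ, s < t →
        ¬(1 - 1 / (4 * d ^ 2) ≤ lazyPowerRayleigh n π A (fun i => T (x i)) s)) →
      t ≤ ⌈Real.log (2 * d) / Real.log (2 / (1 + lambdaTwo n π A))⌉₊ := by
  classical
  set y : Fin n → H := fun i => T (x i) with hy_def
  set B : Matrix (Fin n) (Fin n) ℝ :=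
    (1 / 2 : ℝ) • (1 : Matrix (Fin n) (Fin n) ℝ) + (1 / 2 : ℝ) • A with hB_def
  set lam : ℝ := (1 + lambdaTwo n π A) / 2 with hlam_def
  have hlam_pos : 0 < lam := by rw [hlam_def]; linarith
  have hlam_lt : lam < 1 := by rw [hlam_def]; linarith
  -- basic properties of B
  have hB0 : ∀ i j, 0 ≤ B i j := by
    intro i j
    simp only [hB_def, Matrix.add_apply, Matrix.smul_apply, smul_eq_mul, Matrix.one_apply]
    split_ifs
    · have := hA0 i j; linarith
    · have := hA0 i j; linarith
  have hBrow : ∀ i, ∑ j, B i j = 1 := by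
    intro i
    simp only [hB_def, Matrix.add_apply, Matrix.smul_apply, smul_eq_mul, Matrix.one_apply]
    rw [Finset.sum_add_distrib, ← Finset.mul_sum, ← Finset.mul_sum, hA1 i]
    rw [Finset.sum_ite_eq Finset.univ i (fun _ => (1 : ℝ))]
    norm_num
  have hBrev : ∀ i j, π i * B i j = π j * B j i := by
    intro i j
    simp only [hB_def, Matrix.add_apply, Matrix.smul_apply, smul_eq_mul, Matrix.one_apply]
    by_cases h : i = j
    · subst h; ring
    · rw [if_neg h, if_neg (Ne.symm h)]
      have := hArev i j
      ring_nf
      ring_nf at this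
      nlinarith [hArev i j]
  -- centered configuration
  set m : H := ∑ k, π k • y k with hm_def
  set z : Fin n → H := fun i => y i - m with hz_def
  have hyz_sub : ∀ i j, y i - y j = z i - z j := by
    intro i j
    simp only [hz_def]
    rw [sub_sub_sub_cancel_right]
  have hzmean : ∑ i, π i • z i = 0 := by
    have e : ∀ i, π i • z i = π i • y i - π i • m := by
      intro i; simp only [hz_def]; rw [smul_sub]
    rw [Finset.sum_congr rfl fun i _ => e i, Finset.sum_sub_distrib, ← hm_def,
      ← Finset.sum_smul, hπ1, one_smul, sub_self]
  set Nz : ℝ := ∑ i, π i * ‖z i‖ ^ 2 with hNz_def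
  have hNz_nonneg : 0 ≤ Nz :=
    Finset.sum_nonneg fun i _ => mul_nonneg (hπpos i).le (sq_nonneg _)
  have hNz_pos : 0 < Nz := by
    obtain ⟨i0, j0, hij⟩ := hx
    have hzne : z i0 ≠ z j0 := by
      intro h
      apply hij
      apply T.injective
      have h2 : y i0 - y j0 = z i0 - z j0 := hyz_sub i0 j0
      rw [h, sub_self, sub_eq_zero] at h2
      exact h2
    have hk : ∃ k, z k ≠ 0 := by
      by_contra hcon
      push_neg at hcon
      exact hzne (by rw [hcon i0, hcon j0])
    obtain ⟨k, hk⟩ := hk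
    refine Finset.sum_pos' (fun i _ => mul_nonneg (hπpos i).le (sq_nonneg _))
      ⟨k, Finset.mem_univ k, ?_⟩
    have : 0 < ‖z k‖ := norm_pos_iff.mpr hk
    exact mul_pos (hπpos k) (by positivity)
  -- splitting the B-form into identity and A parts
  have hBsplit : ∀ w : Fin n → H,
      ∑ i, ∑ j, π i * B i j * (inner ℝ (w i) (w j) : ℝ)
        = 1 / 2 * (∑ i, π i * ‖w i‖ ^ 2)
          + 1 / 2 * ∑ i, ∑ j, π i * A i j * (inner ℝ (w i) (w j) : ℝ) := by
    intro w
    have h1 : ∀ i j, π i * B i j * (inner ℝ (w i) (w j) : ℝ)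
        = (if i = j then 1 / 2 * (π i * (inner ℝ (w i) (w j) : ℝ)) else 0)
          + 1 / 2 * (π i * A i j * (inner ℝ (w i) (w j) : ℝ)) := by
      intro i j
      simp only [hB_def, Matrix.add_apply, Matrix.smul_apply, smul_eq_mul, Matrix.one_apply]
      split_ifs <;> ring
    rw [Finset.sum_congr rfl fun i _ => Finset.sum_congr rfl fun j _ => h1 i j]
    have h2 : ∀ i : Fin n, ∑ j, ((if i = j then 1 / 2 * (π i * (inner ℝ (w i) (w j) : ℝ)) else 0)
        + 1 / 2 * (π i * A i j * (inner ℝ (w i) (w j) : ℝ)))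
        = 1 / 2 * (π i * ‖w i‖ ^ 2) + ∑ j, 1 / 2 * (π i * A i j * (inner ℝ (w i) (w j) : ℝ)) := by
      intro i
      rw [Finset.sum_add_distrib]
      congr 1
      rw [Finset.sum_ite_eq Finset.univ i fun j => 1 / 2 * (π i * (inner ℝ (w i) (w j) : ℝ))]
      simp [real_inner_self_eq_norm_sq]
    rw [Finset.sum_congr rfl fun i _ => h2 i, Finset.sum_add_distrib, ← Finset.mul_sum]
    congr 1
    rw [Finset.mul_sum]
    exact Finset.sum_congr rfl fun i _ => by rw [Finset.mul_sum]
  -- PSD and upper bounds for the B-form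
  have hpsd : ∀ w : Fin n → H, 0 ≤ ∑ i, π i * (inner ℝ (matAct B w i) (w i) : ℝ) := by
    intro w
    rw [← form_eq_matAct π B w, hBsplit w]
    have h1 := abs_form_le π hπpos A hA0 hArev hA1 w
    have h2 := neg_abs_le (∑ i, ∑ j, π i * A i j * (inner ℝ (w i) (w j) : ℝ))
    linarith
  have hub : ∀ w : Fin n → H, (∑ i, π i • w i = 0) →
      ∑ i, π i * (inner ℝ (matAct B w i) (w i) : ℝ) ≤ lam * ∑ i, π i * ‖w i‖ ^ 2 := by
    intro w hw
    rw [← form_eq_matAct π B w, hBsplit w]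
    have h1 := formA_le_H π hπpos A hA0 hA1 hArev w hw
    have e : lam * ∑ i, π i * ‖w i‖ ^ 2
        = 1 / 2 * (∑ i, π i * ‖w i‖ ^ 2)
          + 1 / 2 * (lambdaTwo n π A * ∑ i, π i * ‖w i‖ ^ 2) := by
      rw [hlam_def]; ring
    rw [e]
    linarith
  -- iterated contraction
  have hcontract : ∀ t : ℕ, ∑ i, π i * ‖matAct (B ^ t) z i‖ ^ 2 ≤ lam ^ (2 * t) * Nz := by
    intro t
    induction t with
    | zero =>
      rw [pow_zero, matAct_one, mul_zero, pow_zero, one_mul]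
    | succ t ih =>
      have hmean_t : ∑ i, π i • matAct (B ^ t) z i = 0 :=
        matAct_mean π (B ^ t) (rev_pow π B hBrev t) (row_pow B hBrow t) z hzmean
      have hmean_t1 : ∑ i, π i • matAct B (matAct (B ^ t) z) i = 0 :=
        matAct_mean π B hBrev hBrow _ hmean_t
      have hstep := contraction_step π hπpos B hBrev lam hlam_pos.le hpsd hub
        (matAct (B ^ t) z) hmean_t hmean_t1
      have hact : matAct (B ^ (t + 1)) z = matAct B (matAct (B ^ t) z) := by
        rw [pow_succ']
        exact matAct_mul B (B ^ t) z
      rw [hact]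
      calc ∑ i, π i * ‖matAct B (matAct (B ^ t) z) i‖ ^ 2
          ≤ lam ^ 2 * ∑ i, π i * ‖matAct (B ^ t) z i‖ ^ 2 := hstep
        _ ≤ lam ^ 2 * (lam ^ (2 * t) * Nz) :=
            mul_le_mul_of_nonneg_left ih (by positivity)
        _ = lam ^ (2 * (t + 1)) * Nz := by ring
  -- identification of the quadratic form of B^(2t)
  have hG : ∀ t : ℕ, ∑ i, ∑ j, π i * ((B ^ (2 * t)) i j) * (inner ℝ (z i) (z j) : ℝ)
      = ∑ i, π i * ‖matAct (B ^ t) z i‖ ^ 2 := by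
    intro t
    rw [form_eq_matAct]
    rw [show B ^ (2 * t) = B ^ t * B ^ t by rw [two_mul, pow_add]]
    rw [matAct_mul]
    rw [sum_inner_matAct π (B ^ t) (rev_pow π B hBrev t) (matAct (B ^ t) z) z]
    exact Finset.sum_congr rfl fun i _ => by rw [real_inner_self_eq_norm_sq]
  have hG_nonneg : ∀ t : ℕ, 0 ≤ ∑ i, π i * ‖matAct (B ^ t) z i‖ ^ 2 :=
    fun t => Finset.sum_nonneg fun i _ => mul_nonneg (hπpos i).le (sq_nonneg _)
  -- numerator and denominator of the Rayleigh quotient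
  have hNum : ∀ t : ℕ, ∑ i, ∑ j, π i * ((B ^ (2 * t)) i j) * ‖z i - z j‖ ^ 2
      = 2 * Nz - 2 * ∑ i, π i * ‖matAct (B ^ t) z i‖ ^ 2 := by
    intro t
    have hsplit : ∀ i j : Fin n, π i * ((B ^ (2 * t)) i j) * ‖z i - z j‖ ^ 2
        = π i * ((B ^ (2 * t)) i j) * ‖z i‖ ^ 2 + π i * ((B ^ (2 * t)) i j) * ‖z j‖ ^ 2
          - 2 * (π i * ((B ^ (2 * t)) i j) * (inner ℝ (z i) (z j) : ℝ)) := by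
      intro i j
      rw [norm_sub_sq_real]
      ring
    rw [Finset.sum_congr rfl fun i _ => Finset.sum_congr rfl fun j _ => hsplit i j]
    simp only [Finset.sum_sub_distrib, Finset.sum_add_distrib]
    rw [sum_weight_left π (B ^ (2 * t)) (row_pow B hBrow (2 * t)) fun i => ‖z i‖ ^ 2,
      sum_weight_right π (B ^ (2 * t)) (rev_pow π B hBrev (2 * t)) (row_pow B hBrow (2 * t))
        fun i => ‖z i‖ ^ 2]
    rw [show (∑ i, ∑ j, 2 * (π i * ((B ^ (2 * t)) i j) * (inner ℝ (z i) (z j) : ℝ)))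
        = 2 * ∑ i, ∑ j, π i * ((B ^ (2 * t)) i j) * (inner ℝ (z i) (z j) : ℝ) by
      rw [Finset.mul_sum]
      exact Finset.sum_congr rfl fun i _ => by rw [Finset.mul_sum]]
    rw [hG t, ← hNz_def]
    ring
  have hDen : ∑ i, ∑ j, π i * π j * ‖z i - z j‖ ^ 2 = 2 * Nz := by
    have hsplit : ∀ i j : Fin n, π i * π j * ‖z i - z j‖ ^ 2
        = π i * π j * ‖z i‖ ^ 2 + π i * π j * ‖z j‖ ^ 2
          - 2 * (π i * π j * (inner ℝ (z i) (z j) : ℝ)) := by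
      intro i j
      rw [norm_sub_sq_real]
      ring
    rw [Finset.sum_congr rfl fun i _ => Finset.sum_congr rfl fun j _ => hsplit i j]
    simp only [Finset.sum_sub_distrib, Finset.sum_add_distrib]
    have e1 : ∑ i, ∑ j, π i * π j * ‖z i‖ ^ 2 = Nz := by
      rw [hNz_def]
      apply Finset.sum_congr rfl; intro i _
      rw [show ∑ j, π i * π j * ‖z i‖ ^ 2 = (π i * ‖z i‖ ^ 2) * ∑ j, π j by
        rw [Finset.mul_sum]; exact Finset.sum_congr rfl fun j _ => by ring]
      rw [hπ1, mul_one]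
    have e2 : ∑ i, ∑ j, π i * π j * ‖z j‖ ^ 2 = Nz := by
      rw [Finset.sum_comm]
      rw [hNz_def]
      apply Finset.sum_congr rfl; intro j _
      rw [show ∑ i, π i * π j * ‖z j‖ ^ 2 = (π j * ‖z j‖ ^ 2) * ∑ i, π i by
        rw [Finset.mul_sum]; exact Finset.sum_congr rfl fun i _ => by ring]
      rw [hπ1, mul_one]
    have e3 : ∑ i, ∑ j, 2 * (π i * π j * (inner ℝ (z i) (z j) : ℝ)) = 0 := by
      have e4 : ∑ i, ∑ j, π i * π j * (inner ℝ (z i) (z j) : ℝ)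
          = (inner ℝ (∑ i, π i • z i) (∑ j, π j • z j) : ℝ) := by
        rw [sum_inner]
        apply Finset.sum_congr rfl; intro i _
        rw [inner_sum]
        apply Finset.sum_congr rfl; intro j _
        rw [real_inner_smul_left, real_inner_smul_right]
        ring
      rw [show ∑ i, ∑ j, 2 * (π i * π j * (inner ℝ (z i) (z j) : ℝ))
          = 2 * ∑ i, ∑ j, π i * π j * (inner ℝ (z i) (z j) : ℝ) by
        rw [Finset.mul_sum]
        exact Finset.sum_congr rfl fun i _ => by rw [Finset.mul_sum]]
      rw [e4, hzmean, inner_zero_left, mul_zero]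
    rw [e1, e2, e3]
    ring
  -- identification of the Rayleigh quotient
  have hRay : ∀ t : ℕ, lazyPowerRayleigh n π A (fun i => T (x i)) t
      = (2 * Nz - 2 * ∑ i, π i * ‖matAct (B ^ t) z i‖ ^ 2) / (2 * Nz) := by
    intro t
    rw [lazyPowerRayleigh, ← hB_def]
    have hyz : ∀ i j : Fin n, ‖T (x i) - T (x j)‖ = ‖z i - z j‖ := by
      intro i j
      rw [show (T (x i) : H) - T (x j) = y i - y j from rfl, hyz_sub]
    simp only [hyz]
    rw [hNum t, hDen]
  -- part 1 core: lam^t small implies saturation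
  have hmain : ∀ t : ℕ, lam ^ t ≤ 1 / (2 * d) →
      1 - 1 / (4 * d ^ 2) ≤ lazyPowerRayleigh n π A (fun i => T (x i)) t := by
    intro t hlamt
    have hd0 : (0 : ℝ) < d := lt_of_lt_of_le one_pos hd
    rw [hRay t]
    rw [le_div_iff₀ (by positivity : (0 : ℝ) < 2 * Nz)]
    have hGle : ∑ i, π i * ‖matAct (B ^ t) z i‖ ^ 2 ≤ lam ^ (2 * t) * Nz := hcontract t
    have hlam2t : lam ^ (2 * t) ≤ 1 / (4 * d ^ 2) := by
      have h1 : lam ^ (2 * t) = (lam ^ t) ^ 2 := by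
        rw [show 2 * t = t * 2 from mul_comm 2 t, pow_mul]
      have h2 : (lam ^ t) ^ 2 ≤ (1 / (2 * d)) ^ 2 := by
        apply pow_le_pow_left₀ (pow_nonneg hlam_pos.le t) hlamt
      have h3 : (1 / (2 * d) : ℝ) ^ 2 = 1 / (4 * d ^ 2) := by
        rw [div_pow]
        norm_num [mul_pow]
      rw [h1, ← h3]
      exact h2
    have hfin : lam ^ (2 * t) * Nz ≤ 1 / (4 * d ^ 2) * Nz :=
      mul_le_mul_of_nonneg_right hlam2t hNz_nonneg
    nlinarith [hNz_pos, hGle]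
  -- log arithmetic
  have hd0 : (0 : ℝ) < d := lt_of_lt_of_le one_pos hd
  have hlog : ∀ t : ℕ,
      Real.log (2 * d) / Real.log (2 / (1 + lambdaTwo n π A)) ≤ (t : ℝ) →
      lam ^ t ≤ 1 / (2 * d) := by
    intro t ht
    have hlamv : 2 / (1 + lambdaTwo n π A) = lam⁻¹ := by
      rw [hlam_def]
      rw [show ((1 + lambdaTwo n π A) / 2 : ℝ)⁻¹ = 2 / (1 + lambdaTwo n π A) by
        rw [inv_div]]
    have hloginv : Real.log (2 / (1 + lambdaTwo n π A)) = -Real.log lam := by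
      rw [hlamv, Real.log_inv]
    have hloglam_neg : Real.log lam < 0 := Real.log_neg hlam_pos hlam_lt
    have hpos : 0 < Real.log (2 / (1 + lambdaTwo n π A)) := by
      rw [hloginv]; linarith
    rw [div_le_iff₀ hpos] at ht
    rw [hloginv] at ht
    have h1 : Real.log (lam ^ t) ≤ Real.log ((2 * d)⁻¹) := by
      rw [Real.log_pow, Real.log_inv]
      nlinarith [ht]
    have hpowpos : 0 < lam ^ t := pow_pos hlam_pos t
    calc lam ^ t = Real.exp (Real.log (lam ^ t)) := (Real.exp_log hpowpos).symm
      _ ≤ Real.exp (Real.log ((2 * d)⁻¹)) := Real.exp_le_exp.mpr h1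
      _ = (2 * d)⁻¹ := Real.exp_log (by positivity)
      _ = 1 / (2 * d) := (one_div _).symm
  have part1 : ∀ t : ℕ,
      Real.log (2 * d) / Real.log (2 / (1 + lambdaTwo n π A)) ≤ (t : ℝ) →
      1 - 1 / (4 * d ^ 2) ≤ lazyPowerRayleigh n π A (fun i => T (x i)) t :=
    fun t ht => hmain t (hlog t ht)
  refine ⟨part1, ?_⟩
  intro t _ hminimal
  by_contra hgt
  push_neg at hgt
  exact hminimal _ hgt (part1 _ (Nat.le_ceil _))
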